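/- arXiv:2209.05114 — 2 statements merged into one kernel-verified Lean document; each statement's English description precedes it below -/
import Mathlib

section
/- Let F be an n × m Ferrers diagram with m ≥ n and let 2 ≤ d ≤ n. Then κ(F,d) = Σ_{i=1}^{m} max{0, |D_i ∩ F| - d + 1} if and only if κ(F,d) = Σ_{i=1}^{m+n-1} max{0, |D_i ∩ F| - d + 1}. -/
/-- The `n × m` matrix board `[n] × [m]` (1-based). -/
def board (n m : ℕ) : Finset (ℕ × ℕ) := Finset.Icc 1 n ×ˢ Finset.Icc 1 m

/-- `F` is an `n × m` Ferrers diagram: contained in the board, contains `(1,1)` and `(n,m)`,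
right-aligned and top-aligned. -/
def IsFerrers (n m : ℕ) (F : Finset (ℕ × ℕ)) : Prop :=
  F ⊆ board n m ∧ (1, 1) ∈ F ∧ (n, m) ∈ F ∧
  (∀ i j, (i, j) ∈ F → j < m → (i, j + 1) ∈ F) ∧
  (∀ i j, (i, j) ∈ F → 1 < i → (i - 1, j) ∈ F)

/-- The `r`-th diagonal of the `n × m` board: `{(i,j) : j - i = m - r}`. -/
def diag (n m r : ℕ) : Finset (ℕ × ℕ) :=
  (board n m).filter (fun p => p.2 + r = p.1 + m)

/-- The height `c_t` of the `t`-th column of `F`. -/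
def colH (F : Finset (ℕ × ℕ)) (t : ℕ) : ℕ := (F.filter (fun p => p.2 = t)).card

/-- `κ_j(F,d) = Σ_{t=1}^{m-d+1+j} max{c_t - j, 0}` (truncated subtraction). -/
def kappaJ (F : Finset (ℕ × ℕ)) (m d j : ℕ) : ℕ :=
  ∑ t ∈ Finset.Icc 1 (m - d + 1 + j), (colH F t - j)

/-- `κ(F,d) = min_{0 ≤ j ≤ d-1} κ_j(F,d)`. -/
noncomputable def kappa (F : Finset (ℕ × ℕ)) (m d : ℕ) : ℕ :=
  sInf (kappaJ F m d '' Set.Iio d)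

/-- `Σ_{i=1}^{m+n-1} max{0, |D_i ∩ F| - (d-1)}` (truncated subtraction). -/
def diagSum (n m : ℕ) (F : Finset (ℕ × ℕ)) (d : ℕ) : ℕ :=
  ∑ i ∈ Finset.Icc 1 (m + n - 1), ((diag n m i ∩ F).card - (d - 1))

/-- The pair `(F,d)` is MDS-constructible. -/
def MDSConstructible (n m : ℕ) (F : Finset (ℕ × ℕ)) (d : ℕ) : Prop :=
  kappa F m d = diagSum n m F d

section Aux

open Finset

lemma board_mem' {n m : ℕ} {p : ℕ × ℕ} (h : p ∈ board n m) :
    1 ≤ p.1 ∧ p.1 ≤ n ∧ 1 ≤ p.2 ∧ p.2 ≤ m := by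
  simp only [board, Finset.mem_product, Finset.mem_Icc] at h
  omega

lemma col_down {n m : ℕ} {F : Finset (ℕ × ℕ)} (hF : IsFerrers n m F) :
    ∀ i k t : ℕ, (i, t) ∈ F → 1 ≤ k → k ≤ i → (k, t) ∈ F := by
  intro i
  induction i with
  | zero => intro k t _ h1 h2; omega
  | succ i ih =>
    intro k t h h1 h2
    rcases eq_or_lt_of_le h2 with rfl | hlt
    · exact h
    · have hi : (i, t) ∈ F := by
        have := hF.2.2.2.2 (i + 1) t h (by omega)
        simpa using this
      exact ih k t hi h1 (by omega)

lemma col_rows {n m : ℕ} {F : Finset (ℕ × ℕ)} (hF : IsFerrers n m F) (t : ℕ) :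
    (F.filter (fun p => p.2 = t)).image Prod.fst = Finset.Icc 1 (colH F t) := by
  set S := F.filter (fun p => p.2 = t) with hS
  have hinj : Set.InjOn Prod.fst (S : Set (ℕ × ℕ)) := by
    intro p hp q hq hpq
    simp only [hS, Finset.coe_filter, Set.mem_setOf_eq] at hp hq
    exact Prod.ext hpq (hp.2.trans hq.2.symm)
  have hcard : (S.image Prod.fst).card = colH F t := by
    rw [Finset.card_image_of_injOn hinj]; rfl
  rcases eq_or_ne (S.image Prod.fst) ∅ with he | hne
  · rw [he] at hcard ⊢
    simp at hcard
    rw [← hcard]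
    simp
  · have hne' : (S.image Prod.fst).Nonempty := Finset.nonempty_iff_ne_empty.mpr hne
    set M := (S.image Prod.fst).max' hne' with hM
    have heq : S.image Prod.fst = Finset.Icc 1 M := by
      apply Finset.Subset.antisymm
      · intro a ha
        rw [Finset.mem_Icc]
        refine ⟨?_, Finset.le_max' _ a ha⟩
        simp only [hS, Finset.mem_image, Finset.mem_filter] at ha
        obtain ⟨p, ⟨hpF, _⟩, rfl⟩ := ha
        exact (board_mem' (hF.1 hpF)).1
      · intro a ha
        rw [Finset.mem_Icc] at ha
        have hMmem : M ∈ S.image Prod.fst := Finset.max'_mem _ _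
        simp only [hS, Finset.mem_image, Finset.mem_filter] at hMmem
        obtain ⟨p, ⟨hpF, hpt⟩, hfst⟩ := hMmem
        have : (a, t) ∈ F := by
          apply col_down hF p.1 a t _ ha.1 (by omega)
          rw [← hpt, Prod.mk.eta]
          exact hpF
        simp only [hS, Finset.mem_image, Finset.mem_filter]
        exact ⟨(a, t), ⟨this, rfl⟩, rfl⟩
    have : M = colH F t := by
      rw [heq] at hcard; simpa using hcard
    rw [heq, this]

lemma col_count {n m : ℕ} {F : Finset (ℕ × ℕ)} (hF : IsFerrers n m F) (t j : ℕ) :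
    (F.filter (fun p => p.2 = t ∧ j < p.1)).card = colH F t - j := by
  have hfe : F.filter (fun p => p.2 = t ∧ j < p.1)
      = (F.filter (fun p => p.2 = t)).filter (fun p => j < p.1) := by
    rw [Finset.filter_filter]
  have hinj : Set.InjOn Prod.fst (((F.filter (fun p => p.2 = t)).filter (fun p => j < p.1) : Finset (ℕ × ℕ)) : Set (ℕ × ℕ)) := by
    intro p hp q hq hpq
    simp only [Finset.coe_filter, Finset.mem_filter, Set.mem_setOf_eq] at hp hq
    exact Prod.ext hpq (hp.1.2.trans hq.1.2.symm)
  have himg : ((F.filter (fun p => p.2 = t)).filter (fun p => j < p.1)).image Prod.fst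
      = ((F.filter (fun p => p.2 = t)).image Prod.fst).filter (fun a => j < a) := by
    exact Finset.filter_image.symm
  rw [hfe, ← Finset.card_image_of_injOn hinj, himg, col_rows hF]
  have : (Finset.Icc 1 (colH F t)).filter (fun a => j < a) = Finset.Icc (j + 1) (colH F t) := by
    ext a; simp only [Finset.mem_filter, Finset.mem_Icc]; omega
  rw [this, Nat.card_Icc]
  omega

lemma kappaJ_eq_card {n m d : ℕ} {F : Finset (ℕ × ℕ)} (hF : IsFerrers n m F) (j : ℕ) :
    kappaJ F m d j = (F.filter (fun p => j < p.1 ∧ p.2 ≤ m - d + 1 + j)).card := by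
  rw [Finset.card_eq_sum_card_fiberwise
    (f := Prod.snd) (t := Finset.Icc 1 (m - d + 1 + j)) ?_]
  · unfold kappaJ
    apply Finset.sum_congr rfl
    intro t ht
    rw [Finset.mem_Icc] at ht
    have : (F.filter (fun p => j < p.1 ∧ p.2 ≤ m - d + 1 + j)).filter (fun p => p.2 = t)
        = F.filter (fun p => p.2 = t ∧ j < p.1) := by
      ext p
      simp only [Finset.mem_filter]
      constructor
      · rintro ⟨⟨hpF, h1, h2⟩, h3⟩; exact ⟨hpF, h3, h1⟩
      · rintro ⟨hpF, h1, h2⟩; exact ⟨⟨hpF, h2, by omega⟩, h1⟩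
    rw [this, col_count hF]
  · intro p hp
    rw [Finset.mem_coe, Finset.mem_filter] at hp
    have := board_mem' (hF.1 hp.1)
    rw [Finset.mem_coe, Finset.mem_Icc]
    omega

lemma removed_bound {n m d : ℕ} {F : Finset (ℕ × ℕ)} (_hb : F ⊆ board n m)
    (hmn : n ≤ m) (hdn : d ≤ n) (hd2 : 2 ≤ d) {i j : ℕ} (hj : j < d) :
    ((diag n m i ∩ F).filter (fun p => ¬(j < p.1 ∧ p.2 ≤ m - d + 1 + j))).card
      ≤ d - 1 - (i - m) := by
  set D := diag n m i ∩ F with hD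
  have hDmem : ∀ p ∈ D, (1 ≤ p.1 ∧ p.1 ≤ n ∧ 1 ≤ p.2 ∧ p.2 ≤ m) ∧ p.2 + i = p.1 + m := by
    intro p hp
    rw [hD, Finset.mem_inter] at hp
    have h1 := hp.1
    simp only [_root_.diag, Finset.mem_filter] at h1
    exact ⟨board_mem' h1.1, h1.2⟩
  have hsub : D.filter (fun p => ¬(j < p.1 ∧ p.2 ≤ m - d + 1 + j))
      ⊆ D.filter (fun p => p.1 ≤ j) ∪ D.filter (fun p => m - d + 1 + j < p.2) := by
    intro p hp
    rw [Finset.mem_filter] at hp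
    rw [Finset.mem_union, Finset.mem_filter, Finset.mem_filter]
    rcases hp with ⟨hpD, hcond⟩
    by_cases h1 : j < p.1
    · exact Or.inr ⟨hpD, by omega⟩
    · exact Or.inl ⟨hpD, by omega⟩
  have hA : (D.filter (fun p => p.1 ≤ j)).card ≤ (Finset.Icc (i - m + 1) j).card := by
    apply Finset.card_le_card_of_injOn Prod.fst
    · intro p hp
      rw [Finset.mem_coe, Finset.mem_filter] at hp
      have := hDmem p hp.1
      rw [Finset.mem_coe, Finset.mem_Icc]
      omega
    · intro p hp q hq hpq
      rw [Finset.mem_coe, Finset.mem_filter] at hp hq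
      have h1 := hDmem p hp.1
      have h2 := hDmem q hq.1
      exact Prod.ext hpq (by omega)
  have hB : (D.filter (fun p => m - d + 1 + j < p.2)).card
      ≤ (Finset.Icc (m - d + 2 + j) (min m (m + n - i))).card := by
    apply Finset.card_le_card_of_injOn Prod.snd
    · intro p hp
      rw [Finset.mem_coe, Finset.mem_filter] at hp
      have := hDmem p hp.1
      rw [Finset.mem_coe, Finset.mem_Icc]
      omega
    · intro p hp q hq hpq
      rw [Finset.mem_coe, Finset.mem_filter] at hp hq
      have h1 := hDmem p hp.1
      have h2 := hDmem q hq.1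
      exact Prod.ext (by omega) hpq
  have := Finset.card_le_card hsub
  have := Finset.card_union_le (D.filter (fun p => p.1 ≤ j))
    (D.filter (fun p => m - d + 1 + j < p.2))
  rw [Nat.card_Icc] at hA hB
  omega

lemma kappaJ_split {n m d : ℕ} {F : Finset (ℕ × ℕ)} (hF : IsFerrers n m F) (j : ℕ) :
    kappaJ F m d j = ∑ i ∈ Finset.Icc 1 (m + n - 1),
      ((diag n m i ∩ F).filter (fun p => j < p.1 ∧ p.2 ≤ m - d + 1 + j)).card := by
  rw [kappaJ_eq_card hF]
  rw [Finset.card_eq_sum_card_fiberwise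
    (f := fun p => p.1 + m - p.2) (t := Finset.Icc 1 (m + n - 1)) ?_]
  · apply Finset.sum_congr rfl
    intro i _
    congr 1
    ext p
    simp only [Finset.mem_filter, Finset.mem_inter, _root_.diag, board]
    constructor
    · rintro ⟨⟨hpF, hc⟩, hi⟩
      have hbd := board_mem' (hF.1 hpF)
      refine ⟨⟨⟨hF.1 hpF, by omega⟩, hpF⟩, hc⟩
    · rintro ⟨⟨⟨_, hdiag⟩, hpF⟩, hc⟩
      have hbd := board_mem' (hF.1 hpF)
      exact ⟨⟨hpF, hc⟩, by omega⟩
  · intro p hp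
    rw [Finset.mem_coe, Finset.mem_filter] at hp
    have := board_mem' (hF.1 hp.1)
    simp only [Finset.mem_coe, Finset.mem_Icc]
    omega

lemma diagSum_le_kappaJ {n m d : ℕ} {F : Finset (ℕ × ℕ)} (hF : IsFerrers n m F)
    (hmn : n ≤ m) (hdn : d ≤ n) (hd2 : 2 ≤ d) {j : ℕ} (hj : j < d) :
    diagSum n m F d ≤ kappaJ F m d j := by
  rw [kappaJ_split hF, diagSum]
  apply Finset.sum_le_sum
  intro i _
  have hrem := removed_bound (d := d) hF.1 hmn hdn hd2 (i := i) hj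
  have hcards := Finset.card_filter_add_card_filter_not
    (s := diag n m i ∩ F) (p := fun p => j < p.1 ∧ p.2 ≤ m - d + 1 + j)
  beta_reduce at hcards
  omega

lemma diagSum_lt_kappaJ {n m d : ℕ} {F : Finset (ℕ × ℕ)} (hF : IsFerrers n m F)
    (hmn : n ≤ m) (hdn : d ≤ n) (hd2 : 2 ≤ d) {j : ℕ} (hj : j < d)
    {i0 : ℕ} (hi0 : i0 ∈ Finset.Icc 1 (m + n - 1)) (hi0m : m < i0)
    (hbig : d ≤ (diag n m i0 ∩ F).card) :
    diagSum n m F d + 1 ≤ kappaJ F m d j := by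
  rw [kappaJ_split hF, diagSum]
  have key : ∀ i ∈ Finset.Icc 1 (m + n - 1),
      ((diag n m i ∩ F).card - (d - 1)) + (if i = i0 then 1 else 0)
        ≤ ((diag n m i ∩ F).filter (fun p => j < p.1 ∧ p.2 ≤ m - d + 1 + j)).card := by
    intro i _
    have hrem := removed_bound (d := d) hF.1 hmn hdn hd2 (i := i) hj
    have hcards := Finset.card_filter_add_card_filter_not
      (s := diag n m i ∩ F) (p := fun p => j < p.1 ∧ p.2 ≤ m - d + 1 + j)
    beta_reduce at hcards
    by_cases h : i = i0
    · subst h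
      rw [if_pos rfl]
      omega
    · simp only [if_neg h]
      omega
  calc (∑ i ∈ Finset.Icc 1 (m + n - 1), ((diag n m i ∩ F).card - (d - 1))) + 1
      = ∑ i ∈ Finset.Icc 1 (m + n - 1),
          (((diag n m i ∩ F).card - (d - 1)) + (if i = i0 then 1 else 0)) := by
        rw [Finset.sum_add_distrib, Finset.sum_ite_eq' _ i0, if_pos hi0]
    _ ≤ _ := Finset.sum_le_sum key

end Aux

theorem mds_constructible_symmetric (n m d : ℕ) (F : Finset (ℕ × ℕ)) (hF : IsFerrers n m F)
    (hmn : n ≤ m) (hd1 : 2 ≤ d) (hd2 : d ≤ n) :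
    (kappa F m d = ∑ i ∈ Finset.Icc 1 m, ((diag n m i ∩ F).card - (d - 1))) ↔
      kappa F m d = diagSum n m F d := by
  have hmem : kappa F m d ∈ kappaJ F m d '' Set.Iio d :=
    Nat.sInf_mem ⟨kappaJ F m d 0, ⟨0, by simp; omega, rfl⟩⟩
  obtain ⟨j0, hj0, hk⟩ := hmem
  simp only [Set.mem_Iio] at hj0
  have hB : diagSum n m F d ≤ kappa F m d := by
    rw [← hk]; exact diagSum_le_kappaJ hF hmn hd2 hd1 hj0
  have hIcc1 : ∀ x : ℕ, Finset.Icc 1 x = Finset.Ioc 0 x := by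
    intro x; ext a; simp [Finset.mem_Icc, Finset.mem_Ioc]; omega
  have hsplit : diagSum n m F d
      = (∑ i ∈ Finset.Icc 1 m, ((diag n m i ∩ F).card - (d - 1)))
        + ∑ i ∈ Finset.Ioc m (m + n - 1), ((diag n m i ∩ F).card - (d - 1)) := by
    rw [diagSum, hIcc1, hIcc1]
    exact (Finset.sum_Ioc_consecutive _ (by omega) (by omega)).symm
  constructor
  · intro hA
    set A := ∑ i ∈ Finset.Icc 1 m, ((diag n m i ∩ F).card - (d - 1)) with hAdef
    set E := ∑ i ∈ Finset.Ioc m (m + n - 1), ((diag n m i ∩ F).card - (d - 1)) with hEdef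
    omega
  · intro hBe
    have hE : ∑ i ∈ Finset.Ioc m (m + n - 1), ((diag n m i ∩ F).card - (d - 1)) = 0 := by
      by_contra hne
      obtain ⟨i0, hi0, hterm⟩ := Finset.exists_ne_zero_of_sum_ne_zero hne
      rw [Finset.mem_Ioc] at hi0
      have hbig : d ≤ (diag n m i0 ∩ F).card := by omega
      have hstrict := diagSum_lt_kappaJ hF hmn hd2 hd1 hj0
        (i0 := i0) (by rw [Finset.mem_Icc]; omega) hi0.1 hbig
      omega
    omega
end

section
/- If F is an n × n Ferrers diagram (n ≥ 2) such that (F,2) is MDS-constructible, then (F,3) is also MDS-constructible (assuming n ≥ 3 so that d = 3 is admissible). -/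
-- membership in board
lemma mem_board_iff {n m : ℕ} {p : ℕ × ℕ} :
    p ∈ board n m ↔ (1 ≤ p.1 ∧ p.1 ≤ n ∧ 1 ≤ p.2 ∧ p.2 ≤ m) := by
  simp [board, Finset.mem_product]; tauto

lemma ferrers_row1 {n : ℕ} {F : Finset (ℕ × ℕ)} (hF : IsFerrers n n F) :
    ∀ j, 1 ≤ j → j ≤ n → (1, j) ∈ F := by
  obtain ⟨hsub, h11, hnn, hright, htop⟩ := hF
  intro j
  induction j with
  | zero => omega
  | succ j ih =>
    intro h1 h2
    rcases Nat.eq_zero_or_pos j with h | h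
    · subst h; exact h11
    · exact hright 1 j (ih h (by omega)) (by omega)

lemma ferrers_down {n : ℕ} {F : Finset (ℕ × ℕ)} (hF : IsFerrers n n F) :
    ∀ i t, (i, t) ∈ F → ∀ i', 1 ≤ i' → i' ≤ i → (i', t) ∈ F := by
  obtain ⟨hsub, h11, hnn, hright, htop⟩ := hF
  intro i
  induction i with
  | zero => intro t h i' h1 h2; omega
  | succ i ih =>
    intro t h i' h1 h2
    rcases Nat.eq_or_lt_of_le h2 with h' | h'
    · subst h'; exact h
    · have : (i, t) ∈ F := by
        have := htop (i+1) t h (by omega)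
        simpa using this
      exact ih t this i' h1 (by omega)

lemma col_iff {n : ℕ} {F : Finset (ℕ × ℕ)} (hF : IsFerrers n n F)
    (t : ℕ) (ht1 : 1 ≤ t) (htn : t ≤ n) :
    ∀ i, ((i, t) ∈ F ↔ 1 ≤ i ∧ i ≤ colH F t) := by
  classical
  set S : Finset ℕ := (F.filter fun p => p.2 = t).image Prod.fst with hS
  have hmemS : ∀ i, i ∈ S ↔ (i, t) ∈ F := by
    intro i
    simp only [hS, Finset.mem_image, Finset.mem_filter]
    constructor
    · rintro ⟨p, ⟨hp, hpt⟩, rfl⟩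
      have : p = (p.1, t) := by ext <;> simp [hpt]
      rwa [← this]
    · intro h; exact ⟨(i, t), ⟨h, rfl⟩, rfl⟩
  have hcardS : S.card = colH F t := by
    rw [hS, colH]
    apply Finset.card_image_of_injOn
    intro p hp q hq hpq
    simp only [Finset.mem_coe, Finset.mem_filter] at hp hq
    ext
    · exact hpq
    · rw [hp.2, hq.2]
  have h1S : 1 ∈ S := (hmemS 1).2 (ferrers_row1 hF t ht1 htn)
  have hne : S.Nonempty := ⟨1, h1S⟩
  set M := S.max' hne with hM
  have hSM : S = Finset.Icc 1 M := by
    apply Finset.Subset.antisymm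
    · intro i hi
      have h1 : (i, t) ∈ F := (hmemS i).1 hi
      have := mem_board_iff.1 (hF.1 h1)
      exact Finset.mem_Icc.2 ⟨this.1, Finset.le_max' S i hi⟩
    · intro i hi
      rw [Finset.mem_Icc] at hi
      have hMF : (M, t) ∈ F := (hmemS M).1 (S.max'_mem hne)
      exact (hmemS i).2 (ferrers_down hF M t hMF i hi.1 hi.2)
  have hM1 : 1 ≤ M := Finset.le_max' S 1 h1S
  have hcol : colH F t = M := by
    rw [← hcardS, hSM, Nat.card_Icc]; omega
  intro i
  rw [← hmemS i, hSM, Finset.mem_Icc, hcol]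

section Main
variable {n : ℕ} {F : Finset (ℕ × ℕ)}

lemma diag_inter (hF : IsFerrers n n F) (r : ℕ) :
    diag n n r ∩ F = F.filter (fun p => p.2 + r = p.1 + n) := by
  ext p
  simp only [diag, Finset.mem_inter, Finset.mem_filter]
  constructor
  · rintro ⟨⟨_, h⟩, hp⟩; exact ⟨hp, h⟩
  · rintro ⟨hp, h⟩; exact ⟨⟨hF.1 hp, h⟩, hp⟩

lemma card_eq_diag_sum (hF : IsFerrers n n F) :
    ∑ r ∈ Finset.Icc 1 (n + n - 1), (diag n n r ∩ F).card = F.card := by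
  have key : F.card = ∑ r ∈ Finset.Icc 1 (n + n - 1),
      (F.filter (fun p => p.1 + n - p.2 = r)).card := by
    apply Finset.card_eq_sum_card_fiberwise
    intro p hp
    have := mem_board_iff.1 (hF.1 hp)
    simp only [Finset.mem_coe, Finset.mem_Icc]; omega
  rw [key]
  apply Finset.sum_congr rfl
  intro r hr
  rw [diag_inter hF r]
  congr 1
  apply Finset.filter_congr
  intro p hp
  have := mem_board_iff.1 (hF.1 hp)
  rw [Finset.mem_Icc] at hr
  constructor <;> omega

lemma card_eq_col_sum (hF : IsFerrers n n F) :
    ∑ t ∈ Finset.Icc 1 n, colH F t = F.card := by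
  have key : F.card = ∑ t ∈ Finset.Icc 1 n,
      (F.filter (fun p => p.2 = t)).card := by
    apply Finset.card_eq_sum_card_fiberwise
    intro p hp
    have := mem_board_iff.1 (hF.1 hp)
    simp only [Finset.mem_coe, Finset.mem_Icc]; omega
  rw [key]; rfl

end Main

section Main2
variable {n : ℕ} {F : Finset (ℕ × ℕ)}

lemma colH_pos (hF : IsFerrers n n F) {t : ℕ} (h1 : 1 ≤ t) (h2 : t ≤ n) :
    1 ≤ colH F t :=
  ((col_iff hF t h1 h2 1).1 (ferrers_row1 hF t h1 h2)).2

lemma colH_le (hF : IsFerrers n n F) {t : ℕ} (h1 : 1 ≤ t) (h2 : t ≤ n) :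
    colH F t ≤ n := by
  have hc := colH_pos hF h1 h2
  have hm : (colH F t, t) ∈ F := (col_iff hF t h1 h2 _).2 ⟨hc, le_refl _⟩
  exact (mem_board_iff.1 (hF.1 hm)).2.1

lemma colH_n (hF : IsFerrers n n F) (hn : 1 ≤ n) : colH F n = n := by
  have h1 : n ≤ colH F n := ((col_iff hF n hn le_rfl n).1 hF.2.2.1).2
  have h2 := colH_le hF hn (le_refl n)
  omega

lemma diag_one_card (hF : IsFerrers n n F) (hn : 1 ≤ n) :
    (diag n n 1 ∩ F).card = 1 := by
  rw [diag_inter hF]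
  have : F.filter (fun p => p.2 + 1 = p.1 + n) = {(1, n)} := by
    ext p
    simp only [Finset.mem_filter, Finset.mem_singleton]
    constructor
    · rintro ⟨hp, h⟩
      have := mem_board_iff.1 (hF.1 hp)
      have h1 : p.1 = 1 := by omega
      have h2 : p.2 = n := by omega
      ext <;> simp [h1, h2]
    · rintro rfl
      exact ⟨ferrers_row1 hF n hn le_rfl, by simp [Nat.add_comm]⟩
  rw [this]; rfl

lemma diag_card_pos (hF : IsFerrers n n F) {r : ℕ} (h1 : 1 ≤ r) (h2 : r ≤ n) :
    1 ≤ (diag n n r ∩ F).card := by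
  rw [diag_inter hF]
  apply Finset.card_pos.2
  exact ⟨(1, n + 1 - r), Finset.mem_filter.2
    ⟨ferrers_row1 hF (n + 1 - r) (by omega) (by omega), by simp; omega⟩⟩

lemma diag_card_two (hF : IsFerrers n n F) {r : ℕ} (h1 : 2 ≤ r) (h2 : r ≤ n) :
    2 ≤ (diag n n r ∩ F).card := by
  rw [diag_inter hF]
  have hs : ({(1, n + 1 - r), (r, n)} : Finset (ℕ × ℕ)) ⊆
      F.filter (fun p => p.2 + r = p.1 + n) := by
    intro p hp
    simp only [Finset.mem_insert, Finset.mem_singleton] at hp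
    rcases hp with rfl | rfl
    · exact Finset.mem_filter.2
        ⟨ferrers_row1 hF (n + 1 - r) (by omega) (by omega), by simp; omega⟩
    · refine Finset.mem_filter.2 ⟨?_, by simp [Nat.add_comm]⟩
      have hcn := colH_n hF (by omega)
      exact (col_iff hF n (by omega) le_rfl r).2 ⟨by omega, by omega⟩
  have hcard : ({(1, n + 1 - r), (r, n)} : Finset (ℕ × ℕ)).card = 2 := by
    rw [Finset.card_insert_of_notMem (by simp; omega), Finset.card_singleton]
  rw [← hcard]
  exact Finset.card_le_card hs

end Main2

section Main3
variable {n : ℕ} {F : Finset (ℕ × ℕ)}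

lemma card_F_ge (hF : IsFerrers n n F) (hn : 1 ≤ n) : n ≤ F.card := by
  have h := card_eq_col_sum hF
  calc n = ∑ t ∈ Finset.Icc 1 n, 1 := by simp
    _ ≤ ∑ t ∈ Finset.Icc 1 n, colH F t := by
        apply Finset.sum_le_sum
        intro t ht
        rw [Finset.mem_Icc] at ht
        exact colH_pos hF ht.1 ht.2
    _ = F.card := h

lemma split_sum (f : ℕ → ℕ) {a b : ℕ} (h : a ≤ b) :
    ∑ r ∈ Finset.Icc 1 b, f r
      = ∑ r ∈ Finset.Icc 1 a, f r + ∑ r ∈ Finset.Ioc a b, f r := by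
  have h0 : (Finset.Icc 1 a) = Finset.Ioc 0 a := by
    rw [← Finset.Icc_add_one_left_eq_Ioc]; rfl
  have h1 : (Finset.Icc 1 b) = Finset.Ioc 0 b := by
    rw [← Finset.Icc_add_one_left_eq_Ioc]; rfl
  rw [h0, h1, Finset.sum_Ioc_consecutive _ (Nat.zero_le a) h]

lemma kappa_two (hF : IsFerrers n n F) (hn : 2 ≤ n) :
    kappa F n 2 = F.card - n := by
  have hval : ∀ j, j < 2 → kappaJ F n 2 j = F.card - n := by
    intro j hj
    interval_cases j
    · show ∑ t ∈ Finset.Icc 1 (n - 2 + 1 + 0), (colH F t - 0) = F.card - n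
      have he : n - 2 + 1 + 0 = n - 1 := by omega
      have hsplit := split_sum (fun t => colH F t) (show n - 1 ≤ n by omega)
      beta_reduce at hsplit
      have hIoc : Finset.Ioc (n-1) n = {n} := by
        rw [show n = (n-1) + 1 by omega]; simp
      rw [hIoc, Finset.sum_singleton] at hsplit
      rw [card_eq_col_sum hF, colH_n hF (by omega)] at hsplit
      rw [show Finset.Icc 1 (n - 2 + 1 + 0) = Finset.Icc 1 (n - 1) from by rw [he]]
      simp only [Nat.sub_zero]
      omega
    · show ∑ t ∈ Finset.Icc 1 (n - 2 + 1 + 1), (colH F t - 1) = F.card - n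
      have he : n - 2 + 1 + 1 = n := by omega
      rw [he, Finset.sum_tsub_distrib]
      · rw [card_eq_col_sum hF]; simp [Nat.card_Icc]
      · intro t ht
        rw [Finset.mem_Icc] at ht
        exact colH_pos hF ht.1 ht.2
  unfold kappa
  apply le_antisymm
  · exact Nat.sInf_le ⟨0, by norm_num, hval 0 (by norm_num)⟩
  · apply le_csInf
    · exact ⟨kappaJ F n 2 0, ⟨0, by norm_num, rfl⟩⟩
    · rintro b ⟨j, hj, rfl⟩
      rw [hval j hj]

lemma lower_diags_empty (hF : IsFerrers n n F) (hn : 2 ≤ n)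
    (h2 : MDSConstructible n n F 2) :
    ∀ r, n < r → (diag n n r ∩ F).card = 0 := by
  have hd := card_eq_diag_sum hF
  let d : ℕ → ℕ := fun r => (diag n n r ∩ F).card
  -- diagSum
  have hds : diagSum n n F 2 = F.card - ∑ r ∈ Finset.Icc 1 (n + n - 1), min (d r) 1 := by
    unfold diagSum
    have : ∀ r ∈ Finset.Icc 1 (n + n - 1), (d r) - (2 - 1) = d r - min (d r) 1 := by
      intro r _; omega
    rw [Finset.sum_congr rfl this, Finset.sum_tsub_distrib _ (fun r _ => min_le_left _ _), hd]
  have hMle : ∑ r ∈ Finset.Icc 1 (n + n - 1), min (d r) 1 ≤ F.card := by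
    rw [← hd]
    exact Finset.sum_le_sum (fun r _ => min_le_left _ _)
  have hsplit := split_sum (fun r => min (d r) 1) (show n ≤ n + n - 1 by omega)
  beta_reduce at hsplit
  have hfirst : ∑ r ∈ Finset.Icc 1 n, min (d r) 1 = n := by
    have heach : ∀ r ∈ Finset.Icc 1 n, min (d r) 1 = 1 := by
      intro r hr
      rw [Finset.mem_Icc] at hr
      have h1 : 1 ≤ d r := diag_card_pos hF hr.1 hr.2
      omega
    rw [Finset.sum_congr rfl heach]
    simp
  have hcF := card_F_ge hF (by omega)
  have hk := kappa_two hF hn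
  have hM : ∑ r ∈ Finset.Icc 1 (n + n - 1), min (d r) 1 = n := by
    have := h2
    unfold MDSConstructible at this
    rw [hk, hds] at this
    omega
  have htail : ∑ r ∈ Finset.Ioc n (n + n - 1), min (d r) 1 = 0 := by omega
  intro r hr
  rcases le_or_gt r (n + n - 1) with h | h
  · have hmem : r ∈ Finset.Ioc n (n + n - 1) := Finset.mem_Ioc.2 ⟨hr, h⟩
    have hz := Finset.sum_eq_zero_iff.1 htail r hmem
    have : d r = 0 := by omega
    exact this
  · apply Finset.card_eq_zero.2
    apply Finset.eq_empty_of_forall_notMem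
    intro p hp
    rw [diag_inter hF, Finset.mem_filter] at hp
    obtain ⟨hp1, hp2⟩ := hp
    have := mem_board_iff.1 (hF.1 hp1)
    omega

lemma colH_le_t (hF : IsFerrers n n F) (hn : 2 ≤ n)
    (h2 : MDSConstructible n n F 2) {t : ℕ} (h1 : 1 ≤ t) (h2t : t ≤ n) :
    colH F t ≤ t := by
  by_contra hlt
  push_neg at hlt
  set c := colH F t with hc
  have hcF : (c, t) ∈ F := (col_iff hF t h1 h2t c).2 ⟨by omega, le_rfl⟩
  have hcn : c ≤ n := colH_le hF h1 h2t
  have hr := lower_diags_empty hF hn h2 (c + n - t) (by omega)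
  rw [diag_inter hF, Finset.card_eq_zero] at hr
  have : (c, t) ∈ F.filter (fun p => p.2 + (c + n - t) = p.1 + n) :=
    Finset.mem_filter.2 ⟨hcF, by simp; omega⟩
  rw [hr] at this
  simp at this

end Main3

theorem aux_mds_two_three (n : ℕ) (hn : 3 ≤ n)
    (F : Finset (ℕ × ℕ)) (hF : IsFerrers n n F)
    (h2 : MDSConstructible n n F 2) : MDSConstructible n n F 3 := by
  have hn2 : 2 ≤ n := by omega
  set C := F.card with hC
  -- column facts
  have hc1 : colH F 1 = 1 := by
    have := colH_pos hF (le_refl 1) (by omega)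
    have := colH_le_t hF hn2 h2 (le_refl 1) (by omega)
    omega
  have hcol : ∑ t ∈ Finset.Icc 1 n, colH F t = C := card_eq_col_sum hF
  -- A = sum over Icc 1 (n-1)
  have hA : (∑ t ∈ Finset.Icc 1 (n-1), colH F t) + n = C := by
    have hsplit := split_sum (fun t => colH F t) (show n - 1 ≤ n by omega)
    beta_reduce at hsplit
    have hIoc : Finset.Ioc (n-1) n = {n} := by
      rw [show n = (n-1) + 1 by omega]; simp
    rw [hIoc, Finset.sum_singleton, colH_n hF (by omega), hcol] at hsplit
    omega
  have hAge : (n-1) ≤ ∑ t ∈ Finset.Icc 1 (n-1), colH F t := by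
    calc (n-1) = ∑ t ∈ Finset.Icc 1 (n-1), 1 := by simp
      _ ≤ _ := Finset.sum_le_sum (fun t ht => by
          rw [Finset.mem_Icc] at ht
          exact colH_pos hF ht.1 (by omega))
  -- kappa_1 value
  have hk1 : kappaJ F n 3 1 + (n - 1) = ∑ t ∈ Finset.Icc 1 (n-1), colH F t := by
    unfold kappaJ
    rw [show n - 3 + 1 + 1 = n - 1 from by omega, Finset.sum_tsub_distrib]
    · simp only [Finset.sum_const, smul_eq_mul, mul_one, Nat.card_Icc]
      omega
    · intro t ht
      rw [Finset.mem_Icc] at ht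
      exact colH_pos hF ht.1 (by omega)
  -- kappa_1 ≤ kappa_0
  have hk0 : kappaJ F n 3 1 ≤ kappaJ F n 3 0 := by
    have hB : (∑ t ∈ Finset.Icc 1 (n-2), colH F t) + colH F (n-1)
        = ∑ t ∈ Finset.Icc 1 (n-1), colH F t := by
      have hsplit := split_sum (fun t => colH F t) (show n - 2 ≤ n - 1 by omega)
      beta_reduce at hsplit
      have hIoc : Finset.Ioc (n-2) (n-1) = {n-1} := by
        rw [show n - 1 = (n-2) + 1 by omega]; simp
      rw [hIoc, Finset.sum_singleton] at hsplit
      omega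
    have hcle : colH F (n-1) ≤ n - 1 := colH_le_t hF hn2 h2 (by omega) (by omega)
    have hk0v : kappaJ F n 3 0 = ∑ t ∈ Finset.Icc 1 (n-2), colH F t := by
      unfold kappaJ
      rw [show n - 3 + 1 + 0 = n - 2 from by omega]
      simp
    omega
  -- kappa_1 ≤ kappa_2
  have hsum2 : (∑ t ∈ Finset.Ioc 1 n, colH F t) + 1 = C := by
    have hsplit := split_sum (fun t => colH F t) (show 1 ≤ n by omega)
    beta_reduce at hsplit
    rw [hcol] at hsplit
    simp [hc1] at hsplit
    omega
  have hk2 : kappaJ F n 3 1 ≤ kappaJ F n 3 2 := by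
    have hk2split : kappaJ F n 3 2
        = (colH F 1 - 2) + ∑ t ∈ Finset.Ioc 1 n, (colH F t - 2) := by
      unfold kappaJ
      rw [show n - 3 + 1 + 2 = n from by omega]
      have hsplit := split_sum (fun t => colH F t - 2) (show 1 ≤ n by omega)
      beta_reduce at hsplit
      simp at hsplit
      rw [hsplit]
    have hbound : ∑ t ∈ Finset.Ioc 1 n, colH F t
        ≤ (∑ t ∈ Finset.Ioc 1 n, (colH F t - 2)) + 2 * (n - 1) := by
      calc ∑ t ∈ Finset.Ioc 1 n, colH F t
          ≤ ∑ t ∈ Finset.Ioc 1 n, ((colH F t - 2) + 2) :=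
            Finset.sum_le_sum (fun t _ => by omega)
        _ = (∑ t ∈ Finset.Ioc 1 n, (colH F t - 2)) + 2 * (n - 1) := by
            rw [Finset.sum_add_distrib]
            simp [Nat.card_Ioc, mul_comm]
    omega
  -- kappa value
  have hkappa : kappa F n 3 = kappaJ F n 3 1 := by
    unfold kappa
    apply le_antisymm
    · exact Nat.sInf_le ⟨1, by norm_num, rfl⟩
    · apply le_csInf
      · exact ⟨kappaJ F n 3 1, ⟨1, by norm_num, rfl⟩⟩
      · rintro b ⟨j, hj, rfl⟩
        simp only [Set.mem_Iio] at hj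
        interval_cases j
        · exact hk0
        · exact le_rfl
        · exact hk2
  -- diag side
  have hd := card_eq_diag_sum hF
  have hempty := lower_diags_empty hF hn2 h2
  have hd1 := diag_one_card hF (by omega)
  -- split the diag sum of cards
  have hdsplit := split_sum (fun r => (diag n n r ∩ F).card) (show n ≤ n + n - 1 by omega)
  beta_reduce at hdsplit
  have htail0 : ∑ r ∈ Finset.Ioc n (n + n - 1), (diag n n r ∩ F).card = 0 := by
    apply Finset.sum_eq_zero
    intro r hr
    rw [Finset.mem_Ioc] at hr
    exact hempty r hr.1
  have hdsplit2 := split_sum (fun r => (diag n n r ∩ F).card) (show 1 ≤ n by omega)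
  beta_reduce at hdsplit2
  have hIcc11 : Finset.Icc 1 1 = {1} := by simp
  rw [hIcc11, Finset.sum_singleton, hd1] at hdsplit2
  -- S2 := sum over Ioc 1 n of d r
  have hS2 : (∑ r ∈ Finset.Ioc 1 n, (diag n n r ∩ F).card) + 1 = C := by
    rw [hd] at hdsplit
    omega
  have hdge2 : ∀ r ∈ Finset.Ioc 1 n, 2 ≤ (diag n n r ∩ F).card := by
    intro r hr
    rw [Finset.mem_Ioc] at hr
    exact diag_card_two hF (by omega) hr.2
  -- diagSum computation
  have hdsval : diagSum n n F 3 + 2 * (n - 1)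
      = ∑ r ∈ Finset.Ioc 1 n, (diag n n r ∩ F).card := by
    unfold diagSum
    have e1 : ∑ i ∈ Finset.Icc 1 (n + n - 1), ((diag n n i ∩ F).card - (3 - 1))
        = ∑ i ∈ Finset.Icc 1 n, ((diag n n i ∩ F).card - 2) := by
      rw [show (3:ℕ) - 1 = 2 from rfl]
      have hsplit := split_sum (fun r => (diag n n r ∩ F).card - 2) (show n ≤ n + n - 1 by omega)
      beta_reduce at hsplit
      have : ∑ r ∈ Finset.Ioc n (n + n - 1), ((diag n n r ∩ F).card - 2) = 0 := by
        apply Finset.sum_eq_zero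
        intro r hr
        rw [Finset.mem_Ioc] at hr
        have h0 := hempty r hr.1
        omega
      omega
    rw [e1]
    have e2 : ∑ i ∈ Finset.Icc 1 n, ((diag n n i ∩ F).card - 2)
        = ∑ i ∈ Finset.Ioc 1 n, ((diag n n i ∩ F).card - 2) := by
      have hsplit := split_sum (fun r => (diag n n r ∩ F).card - 2) (show 1 ≤ n by omega)
      beta_reduce at hsplit
      rw [hIcc11, Finset.sum_singleton, hd1] at hsplit
      simpa using hsplit
    rw [e2, Finset.sum_tsub_distrib _ hdge2]
    have : ∑ i ∈ Finset.Ioc 1 n, 2 ≤ ∑ i ∈ Finset.Ioc 1 n, (diag n n i ∩ F).card :=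
      Finset.sum_le_sum hdge2
    simp only [Finset.sum_const, smul_eq_mul, Nat.card_Ioc] at this ⊢
    omega
  unfold MDSConstructible
  rw [hkappa]
  omega


theorem mds_constructible_two_implies_three (n : ℕ) (hn : 3 ≤ n)
    (F : Finset (ℕ × ℕ)) (hF : IsFerrers n n F)
    (h2 : MDSConstructible n n F 2) : MDSConstructible n n F 3 := by
  exact aux_mds_two_three n hn F hF h2
end
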